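/- Let ρ_0, ..., ρ_U be nonnegative reals satisfying the nested constraints ∑_{r=0}^{j} ρ_r ≤ 2j + 1 for every j = 0, ..., U. Then ∑_{r=0}^{U} ρ_r/√(r+1) ≤ 1 + 2·∑_{r=1}^{U} 1/√(r+1), and the maximum is attained by ρ_0 = 1 and ρ_r = 2 for r ≥ 1. -/

import Mathlib

open Finset

private lemma b_partial_sum (i : ℕ) :
    ∑ j ∈ Finset.range (i + 1), (if j = 0 then (1 : ℝ) else 2) = 2 * i + 1 := by
  induction i with
  | zero => simp
  | succ n ih =>
    rw [Finset.sum_range_succ, ih]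
    simp
    push_cast
    ring

private lemma b_weighted_sum (U : ℕ) :
    ∑ r ∈ Finset.range (U + 1),
        (if r = 0 then (1 : ℝ) else 2) / Real.sqrt (r + 1) =
      1 + 2 * ∑ r ∈ Finset.Icc 1 U, 1 / Real.sqrt (r + 1) := by
  induction U with
  | zero => simp
  | succ n ih =>
    rw [Finset.sum_range_succ, ih, Finset.sum_Icc_succ_top (by omega : 1 ≤ n + 1)]
    simp only [Nat.succ_ne_zero, if_false]
    push_cast
    ring

theorem lp_weighted_sum_bound
    (U : ℕ) (ρ : ℕ → ℝ)
    (hρ : ∀ r ≤ U, 0 ≤ ρ r)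
    (hconstr : ∀ j ≤ U, ∑ r ∈ Finset.range (j + 1), ρ r ≤ 2 * (j : ℝ) + 1) :
    (∑ r ∈ Finset.range (U + 1), ρ r / Real.sqrt (r + 1) ≤
      1 + 2 * ∑ r ∈ Finset.Icc 1 U, 1 / Real.sqrt (r + 1)) ∧
    (∑ r ∈ Finset.range (U + 1),
        (if r = 0 then (1 : ℝ) else 2) / Real.sqrt (r + 1) =
      1 + 2 * ∑ r ∈ Finset.Icc 1 U, 1 / Real.sqrt (r + 1)) := by
  set w : ℕ → ℝ := fun r => (Real.sqrt (r + 1))⁻¹ with hw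
  have hw_nonneg : ∀ r : ℕ, 0 ≤ w r := fun r => by positivity
  have hw_anti : ∀ r : ℕ, w (r + 1) ≤ w r := by
    intro r
    apply inv_anti₀
    · positivity
    · apply Real.sqrt_le_sqrt; push_cast; linarith
  have key : ∀ a : ℕ → ℝ,
      ∑ r ∈ Finset.range (U + 1), a r / Real.sqrt (r + 1) =
        w U * (∑ r ∈ Finset.range (U + 1), a r) +
          ∑ i ∈ Finset.range U, (w i - w (i + 1)) * (∑ j ∈ Finset.range (i + 1), a j) := by
    intro a
    have := Finset.sum_range_by_parts w a (U + 1)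
    simp only [smul_eq_mul] at this
    have heq : ∀ r ∈ Finset.range (U + 1), a r / Real.sqrt (r + 1) = w r * a r := by
      intro r _; rw [hw]; ring
    rw [Finset.sum_congr rfl heq, this]
    simp only [Nat.add_sub_cancel]
    rw [sub_eq_add_neg, ← Finset.sum_neg_distrib]
    congr 1
    apply Finset.sum_congr rfl
    intro i _
    ring
  have hb := b_weighted_sum U
  constructor
  · rw [← hb, key ρ, key (fun r => if r = 0 then (1 : ℝ) else 2)]
    have hbps : ∀ i : ℕ, ∑ j ∈ Finset.range (i + 1),
        (if j = 0 then (1 : ℝ) else 2) = 2 * i + 1 := b_partial_sum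
    apply add_le_add
    · rw [hbps U]
      exact mul_le_mul_of_nonneg_left (hconstr U le_rfl) (hw_nonneg U)
    · apply Finset.sum_le_sum
      intro i hi
      rw [hbps i]
      exact mul_le_mul_of_nonneg_left (hconstr i (le_of_lt (Finset.mem_range.mp hi)))
        (sub_nonneg.mpr (hw_anti i))
  · exact hb
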